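/- Let φ be an exponential map on an integral domain A over a field k, and for i ≥ 0 let D^i(a) be the coefficient of U^i in φ(a). Then for every a ∈ A and every natural number i, deg_φ(D^i(a)) ≤ deg_φ(a) − i. In particular, if a ∈ A is nonzero and n = deg_φ(a), then D^n(a) ∈ A^φ. -/
import Mathlib


open Polynomial

/-- An exponential map on a `k`-algebra `A`: a `k`-algebra homomorphism `φ : A → A[U]`
such that evaluating at `U = 0` is the identity and `φ_S φ_U = φ_{S+U}`. -/
def IsExpMap {k A : Type*} [CommSemiring k] [CommSemiring A] [Algebra k A]
    (φ : A →ₐ[k] A[X]) : Prop :=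
  (∀ a : A, (φ a).eval 0 = a) ∧
  (∀ a : A,
    eval₂ ((mapRingHom (C : A →+* A[X])).comp (φ : A →+* A[X])) (C X) (φ a)
      = eval₂ ((C : A[X] →+* A[X][X]).comp (C : A →+* A[X])) (X + C X) (φ a))

/-- The ring of `φ`-invariants `A^φ = {a : A | φ a = a}`. -/
noncomputable def expInv {k A : Type*} [CommSemiring k] [CommSemiring A] [Algebra k A]
    (φ : A →ₐ[k] A[X]) : Subalgebra k A :=
  AlgHom.equalizer φ (IsScalarTower.toAlgHom k A A[X])

/-- The AK invariant: the intersection of the rings of invariants of all exponential maps. -/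
noncomputable def AK (k A : Type*) [CommSemiring k] [CommSemiring A] [Algebra k A] : Subalgebra k A :=
  ⨅ φ ∈ {ψ : A →ₐ[k] A[X] | IsExpMap ψ}, expInv φ



private lemma expKey {k A : Type*} [Field k] [CommRing A] [IsDomain A] [Algebra k A]
    (φ : A →ₐ[k] A[X]) (hφ : IsExpMap φ) (a : A) (i j : ℕ) :
    (φ ((φ a).coeff i)).coeff j = ((i+j).choose j : A) * (φ a).coeff (i+j) := by
  have H := congrArg (fun p : A[X][X] => (p.coeff j).coeff i) (hφ.2 a)
  simp only [eval₂_eq_sum, Polynomial.sum, finset_sum_coeff, RingHom.coe_comp, Function.comp_apply,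
    coe_mapRingHom, AlgHom.coe_toRingHom, ← C_pow, coeff_mul_C, coeff_map, coeff_X_add_C_pow,
    ← C_eq_natCast, coeff_C_mul, coeff_X_pow, mul_ite, mul_one, mul_zero] at H
  rw [Finset.sum_ite_eq ((φ a).support) i (fun x => (φ ((φ a).coeff x)).coeff j),
    Finset.sum_eq_single (i + j)
      (fun b _ hne => by
        rcases Nat.lt_or_ge b j with hb | hb
        · simp [Nat.choose_eq_zero_of_lt hb]
        · have : ¬ (i = b - j) := fun h => hne (by omega)
          simp [this])
      (fun h => by simp [notMem_support_iff.mp h])] at H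
  simp only [Nat.add_sub_cancel, if_true, one_mul, eq_self_iff_true] at H
  by_cases h : i ∈ (φ a).support
  · rw [if_pos h] at H; rw [H]; ring
  · rw [if_neg h] at H
    rw [notMem_support_iff.mp h, map_zero, coeff_zero]; linear_combination H

/-- For an exponential map `φ` on a domain `A`, writing `D^i(a)` for the
coefficient of `U^i` in `φ(a)` and `deg_φ(a) = deg_U(φ(a))`, one has
`deg_φ(D^i(a)) ≤ deg_φ(a) - i` (stated additively, with degrees in `ℕ∞`);
in particular if `a ≠ 0` and `n = deg_φ(a)` then `D^n(a) ∈ A^φ`. -/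
theorem statement4 {k A : Type*} [Field k] [CommRing A] [IsDomain A] [Algebra k A]
    (φ : A →ₐ[k] A[X]) (hφ : IsExpMap φ) :
    (∀ (a : A) (i : ℕ), (φ ((φ a).coeff i)).degree + (i : WithBot ℕ) ≤ (φ a).degree) ∧
    (∀ a : A, a ≠ 0 → (φ a).coeff ((φ a).natDegree) ∈ expInv φ) := by
  constructor
  · intro a i
    by_cases hq : φ ((φ a).coeff i) = 0
    · simp [hq]
    · rw [degree_eq_natDegree hq]
      set j := (φ ((φ a).coeff i)).natDegree with hj
      have hc : (φ ((φ a).coeff i)).coeff j ≠ 0 := mt leadingCoeff_eq_zero.mp hq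
      have h2 : (φ a).coeff (i + j) ≠ 0 := fun h => hc (by rw [expKey φ hφ a i j, h, mul_zero])
      have hle : i + j ≤ (φ a).natDegree := le_natDegree_of_ne_zero h2
      have hφa : φ a ≠ 0 := fun h => h2 (by simp [h])
      rw [degree_eq_natDegree hφa]
      exact_mod_cast (by omega : j + i ≤ (φ a).natDegree)
  · intro a ha
    have hφa : φ a ≠ 0 := fun h => ha (by rw [← hφ.1 a, h, eval_zero])
    set n := (φ a).natDegree with hn
    set b := (φ a).coeff n with hb'
    have hb : b ≠ 0 := mt leadingCoeff_eq_zero.mp hφa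
    have hd : ∀ m, m ≠ 0 → (φ b).coeff m = 0 := by
      intro m hm
      rw [hb', expKey φ hφ a n m,
        coeff_eq_zero_of_natDegree_lt (by omega : (φ a).natDegree < n + m), mul_zero]
    have hC : φ b = C b := by
      ext m
      cases m with
      | zero => rw [coeff_C_zero, coeff_zero_eq_eval_zero, hφ.1 b]
      | succ m => rw [hd _ (Nat.succ_ne_zero m), coeff_C, if_neg (Nat.succ_ne_zero m)]
    show φ b = IsScalarTower.toAlgHom k A A[X] b
    rw [hC]
    simp [IsScalarTower.toAlgHom_apply, Polynomial.algebraMap_eq]
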